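/- (No-regret policy optimization with per-round MDPs) Suppose M_1,…,M_T are MDPs sharing the same transition kernel P, discount γ, and initial state s_0, and f_t = Q^{π_t}_{M_t} with values in [0, V_max]. If the policies are updated by π_{t+1}(a|s) ∝ π_t(a|s) exp(η f_t(s,a)) from the uniform policy π_1 with η = sqrt(log|A|/(2 V_max² T)), then max_{π} Σ_{t=1}^{T} (J_{M_t}(π) − J_{M_t}(π_t)) ≤ (2 V_max sqrt(2 T log|A|)) / (1−γ). -/

import Mathlib

open Finset

/-- Distribution of the state-action pair at time `t` under policy `π` started at `s0`,
for shared transition kernel `P`. -/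
def stepDist {S A : Type*} [Fintype S] [Fintype A] [DecidableEq S]
    (P : S → A → S → ℝ) (π : S → A → ℝ) (s0 : S) : ℕ → S × A → ℝ
  | 0 => fun p => (if p.1 = s0 then (1 : ℝ) else 0) * π p.1 p.2
  | (t + 1) => fun p => ∑ q : S × A, stepDist P π s0 t q * P q.1 q.2 p.1 * π p.1 p.2

/-- Expected discounted return of `π` in the MDP with transitions `P` and reward `R`,
started at `s0`. -/
noncomputable def ret {S A : Type*} [Fintype S] [Fintype A] [DecidableEq S]
    (P : S → A → S → ℝ) (γ : ℝ) (s0 : S) (R : S → A → ℝ) (π : S → A → ℝ) : ℝ :=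
  ∑' t : ℕ, γ ^ t * ∑ p : S × A, stepDist P π s0 t p * R p.1 p.2

section
variable {S A : Type*} [Fintype S] [Fintype A] [DecidableEq S]

def sMarg (P : S → A → S → ℝ) (ρ : S → A → ℝ) (s0 : S) : ℕ → S → ℝ
  | 0 => fun s => if s = s0 then (1 : ℝ) else 0
  | (k + 1) => fun s' => ∑ p : S × A, (sMarg P ρ s0 k p.1 * ρ p.1 p.2) * P p.1 p.2 s'

variable {P : S → A → S → ℝ} {ρ : S → A → ℝ} {s0 : S}

lemma stepDist_eq (k : ℕ) (p : S × A) :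
    stepDist P ρ s0 k p = sMarg P ρ s0 k p.1 * ρ p.1 p.2 := by
  induction k generalizing p with
  | zero => rfl
  | succ k ih =>
    show (∑ q : S × A, stepDist P ρ s0 k q * P q.1 q.2 p.1 * ρ p.1 p.2) = _
    rw [show sMarg P ρ s0 (k+1) p.1 = ∑ q : S × A, (sMarg P ρ s0 k q.1 * ρ q.1 q.2) * P q.1 q.2 p.1 from rfl,
      Finset.sum_mul]
    exact Finset.sum_congr rfl fun q _ => by rw [ih]

lemma sMarg_nonneg (hP0 : ∀ s a s', 0 ≤ P s a s') (hρ0 : ∀ s a, 0 ≤ ρ s a)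
    (k : ℕ) (s : S) : 0 ≤ sMarg P ρ s0 k s := by
  induction k generalizing s with
  | zero => dsimp [sMarg]; positivity
  | succ k ih =>
    exact Finset.sum_nonneg fun p _ =>
      mul_nonneg (mul_nonneg (ih p.1) (hρ0 p.1 p.2)) (hP0 p.1 p.2 s)

lemma sMarg_sum_one (hP1 : ∀ s a, ∑ s', P s a s' = 1) (hρ1 : ∀ s, ∑ a, ρ s a = 1)
    (k : ℕ) : ∑ s, sMarg P ρ s0 k s = 1 := by
  induction k with
  | zero => simp [sMarg]
  | succ k ih =>
    show (∑ s', ∑ p : S × A, (sMarg P ρ s0 k p.1 * ρ p.1 p.2) * P p.1 p.2 s') = 1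
    rw [Finset.sum_comm]
    have h : ∀ p : S × A, p ∈ (univ : Finset (S × A)) →
        (∑ s', (sMarg P ρ s0 k p.1 * ρ p.1 p.2) * P p.1 p.2 s')
          = sMarg P ρ s0 k p.1 * ρ p.1 p.2 := fun p _ => by
      rw [← Finset.mul_sum, hP1, mul_one]
    rw [Finset.sum_congr rfl h, Fintype.sum_prod_type]
    calc (∑ s, ∑ a, sMarg P ρ s0 k s * ρ s a) = ∑ s, sMarg P ρ s0 k s := by
          refine Finset.sum_congr rfl fun s _ => ?_
          rw [← Finset.mul_sum, hρ1, mul_one]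
      _ = 1 := ih

lemma summable_geo_bound {γ C : ℝ} (hγ0 : 0 ≤ γ) (hγ1 : γ < 1) {c : ℕ → ℝ}
    (hc : ∀ k, |c k| ≤ C) : Summable (fun k => γ ^ k * c k) := by
  refine Summable.of_norm_bounded
    ((summable_geometric_of_lt_one hγ0 hγ1).mul_left C) fun k => ?_
  rw [Real.norm_eq_abs, abs_mul, abs_pow, abs_of_nonneg hγ0, mul_comm]
  exact mul_le_mul_of_nonneg_right (hc k) (pow_nonneg hγ0 k)

lemma abs_avg_le {ι : Type*} [Fintype ι] {μ v : ι → ℝ} {C : ℝ}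
    (h0 : ∀ i, 0 ≤ μ i) (h1 : ∑ i, μ i = 1) (hv : ∀ i, |v i| ≤ C) :
    |∑ i, μ i * v i| ≤ C := by
  calc |∑ i, μ i * v i| ≤ ∑ i, |μ i * v i| := Finset.abs_sum_le_sum_abs _ _
    _ ≤ ∑ i, μ i * C := Finset.sum_le_sum fun i _ => by
        rw [abs_mul, abs_of_nonneg (h0 i)]
        exact mul_le_mul_of_nonneg_left (hv i) (h0 i)
    _ = C := by rw [← Finset.sum_mul, h1, one_mul]

/-- Performance difference lemma. -/
lemma perf_diff [Nonempty A]
    (hP0 : ∀ s a s', 0 ≤ P s a s') (hP1 : ∀ s a, ∑ s', P s a s' = 1)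
    {γ : ℝ} (hγ0 : 0 ≤ γ) (hγ1 : γ < 1)
    (R Q w : S → A → ℝ) (hw0 : ∀ s a, 0 ≤ w s a) (hw1 : ∀ s, ∑ a, w s a = 1)
    (hQrec : ∀ s a, Q s a = R s a + γ * ∑ s', P s a s' * ∑ a', w s' a' * Q s' a')
    {CQ : ℝ} (hCQ : ∀ s a, |Q s a| ≤ CQ)
    (hρ0 : ∀ s a, 0 ≤ ρ s a) (hρ1 : ∀ s, ∑ a, ρ s a = 1) :
    ret P γ s0 R ρ = (∑ a, w s0 a * Q s0 a)
      + ∑' k : ℕ, γ ^ k * ∑ s, sMarg P ρ s0 k s *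
          ((∑ a, ρ s a * Q s a) - ∑ a, w s a * Q s a) := by
  classical
  set μ := sMarg P ρ s0 with hμ
  set V : S → ℝ := fun s => ∑ a, w s a * Q s a with hV
  set Ak : ℕ → ℝ := fun k => ∑ s, μ k s * ∑ a, ρ s a * Q s a with hAk
  set Bk : ℕ → ℝ := fun k => ∑ s, μ k s * V s with hBk
  set rk : ℕ → ℝ := fun k => ∑ s, μ k s * ∑ a, ρ s a * R s a with hrk
  have hCQ0 : 0 ≤ CQ := le_trans (abs_nonneg _) (hCQ s0 (Classical.arbitrary A))
  have hμ0 : ∀ k s, 0 ≤ μ k s := sMarg_nonneg hP0 hρ0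
  have hμ1 : ∀ k, ∑ s, μ k s = 1 := sMarg_sum_one hP1 hρ1
  have hVbd : ∀ s, |V s| ≤ CQ := fun s => abs_avg_le (hw0 s) (hw1 s) (fun a => hCQ s a)
  have hρQbd : ∀ s, |∑ a, ρ s a * Q s a| ≤ CQ := fun s =>
    abs_avg_le (hρ0 s) (hρ1 s) (fun a => hCQ s a)
  have hPVbd : ∀ s a, |∑ s', P s a s' * V s'| ≤ CQ := fun s a =>
    abs_avg_le (hP0 s a) (hP1 s a) hVbd
  have hRbd : ∀ s a, |R s a| ≤ 2 * CQ := by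
    intro s a
    have h := hQrec s a
    have : R s a = Q s a - γ * ∑ s', P s a s' * V s' := by rw [h]; ring
    rw [this]
    calc |Q s a - γ * ∑ s', P s a s' * V s'| ≤ |Q s a| + |γ * ∑ s', P s a s' * V s'| :=
          abs_sub _ _
      _ ≤ CQ + 1 * CQ := by
          refine add_le_add (hCQ s a) ?_
          rw [abs_mul, abs_of_nonneg hγ0]
          exact mul_le_mul (le_of_lt hγ1) (hPVbd s a) (abs_nonneg _) zero_le_one
      _ = 2 * CQ := by ring
  have hAbd : ∀ k, |Ak k| ≤ CQ := fun k => abs_avg_le (hμ0 k) (hμ1 k) hρQbd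
  have hBbd : ∀ k, |Bk k| ≤ CQ := fun k => abs_avg_le (hμ0 k) (hμ1 k) hVbd
  have hrbd : ∀ k, |rk k| ≤ 2 * CQ := fun k => abs_avg_le (hμ0 k) (hμ1 k) fun s =>
    abs_avg_le (hρ0 s) (hρ1 s) (fun a => hRbd s a)
  -- key recursion
  have key : ∀ k, Ak k = rk k + γ * Bk (k + 1) := by
    intro k
    have h1 : ∀ s, μ k s * ∑ a, ρ s a * Q s a
        = μ k s * ∑ a, ρ s a * R s a
          + γ * ∑ a, (μ k s * ρ s a) * ∑ s', P s a s' * V s' := by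
      intro s
      rw [Finset.mul_sum, Finset.mul_sum, Finset.mul_sum, ← Finset.sum_add_distrib]
      refine Finset.sum_congr rfl fun a _ => ?_
      rw [hQrec s a]; ring
    rw [hAk]
    simp only [h1]
    rw [Finset.sum_add_distrib, ← Finset.mul_sum]
    congr 1
    congr 1
    -- ∑ s, ∑ a, (μ k s * ρ s a) * ∑ s', P s a s' * V s' = Bk (k+1)
    have h2 : Bk (k + 1) = ∑ p : S × A, ∑ s', ((μ k p.1 * ρ p.1 p.2) * P p.1 p.2 s') * V s' := by
      rw [hBk]
      simp only [hμ]
      show (∑ s', (∑ p : S × A, (sMarg P ρ s0 k p.1 * ρ p.1 p.2) * P p.1 p.2 s') * V s') = _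
      rw [Finset.sum_comm]
      exact Finset.sum_congr rfl fun p _ => by rw [Finset.sum_mul]
    rw [h2, Fintype.sum_prod_type]
    refine Finset.sum_congr rfl fun s _ => Finset.sum_congr rfl fun a _ => ?_
    rw [Finset.mul_sum]
    exact Finset.sum_congr rfl fun s' _ => by ring
  -- summability
  have sA : Summable (fun k => γ ^ k * Ak k) := summable_geo_bound hγ0 hγ1 hAbd
  have sB : Summable (fun k => γ ^ k * Bk k) := summable_geo_bound hγ0 hγ1 hBbd
  have sr : Summable (fun k => γ ^ k * rk k) := summable_geo_bound hγ0 hγ1 hrbd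
  have sB' : Summable (fun k => γ ^ (k + 1) * Bk (k + 1)) := by
    have : ∀ k, γ ^ (k + 1) * Bk (k + 1) = γ ^ k * (γ * Bk (k + 1)) := fun k => by ring
    simp only [this]
    exact summable_geo_bound (C := CQ) hγ0 hγ1 fun k => by
      rw [abs_mul, abs_of_nonneg hγ0]
      nlinarith [hBbd (k + 1), abs_nonneg (Bk (k + 1))]
  -- rewrite ret
  have hret : ret P γ s0 R ρ = ∑' k : ℕ, γ ^ k * rk k := by
    unfold ret
    congr 1
    funext k
    congr 1
    rw [hrk]
    simp only [stepDist_eq]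
    rw [Fintype.sum_prod_type]
    exact Finset.sum_congr rfl fun s _ => by
      rw [Finset.mul_sum]
      exact Finset.sum_congr rfl fun a _ => by ring
  have hB0 : Bk 0 = V s0 := by
    rw [hBk]
    show (∑ s, (if s = s0 then (1:ℝ) else 0) * V s) = V s0
    simp [ite_mul]
  have hsummand : ∀ k : ℕ, (∑ s, μ k s * ((∑ a, ρ s a * Q s a) - V s)) = Ak k - Bk k := by
    intro k
    rw [hAk, hBk, ← Finset.sum_sub_distrib]
    exact Finset.sum_congr rfl fun s _ => by ring
  have step1 : ∑' k : ℕ, γ ^ k * (Ak k - Bk k)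
      = (∑' k : ℕ, γ ^ k * Ak k) - ∑' k : ℕ, γ ^ k * Bk k := by
    rw [← Summable.tsum_sub sA sB]
    exact tsum_congr fun k => by ring
  have step2 : ∑' k : ℕ, γ ^ k * Ak k
      = (∑' k : ℕ, γ ^ k * rk k) + ∑' k : ℕ, γ ^ (k + 1) * Bk (k + 1) := by
    rw [← Summable.tsum_add sr sB']
    exact tsum_congr fun k => by rw [key k]; ring
  have step3 : ∑' k : ℕ, γ ^ k * Bk k
      = Bk 0 + ∑' k : ℕ, γ ^ (k + 1) * Bk (k + 1) := by
    have h := Summable.tsum_eq_zero_add sB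
    simpa using h
  have goal2 : ∑' k : ℕ, γ ^ k * ∑ s, μ k s * ((∑ a, ρ s a * Q s a) - V s)
      = ∑' k : ℕ, γ ^ k * (Ak k - Bk k) := tsum_congr fun k => by rw [hsummand k]
  rw [show (∑ a, w s0 a * Q s0 a) = V s0 from rfl, goal2, step1, step2, step3, hret, hB0]
  ring
end


lemma exp_quad {x : ℝ} (hx0 : 0 ≤ x) (hx1 : x ≤ 1) : Real.exp x ≤ 1 + x + x ^ 2 := by
  have h := Real.exp_bound (x := x) (by rwa [abs_of_nonneg hx0]) (n := 2) (by norm_num)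
  rw [abs_of_nonneg hx0] at h
  simp [Finset.sum_range_succ] at h
  rw [abs_le] at h
  nlinarith [h.2, sq_nonneg x]

lemma exp_weights {A : Type*} [Fintype A] [Nonempty A] (T : ℕ) (g : ℕ → A → ℝ)
    (Vmax η : ℝ) (hη : 0 < η) (hηV : η * Vmax ≤ 1)
    (hg0 : ∀ t ∈ Icc 1 T, ∀ a, 0 ≤ g t a) (hg1 : ∀ t ∈ Icc 1 T, ∀ a, g t a ≤ Vmax)
    (w : ℕ → A → ℝ)
    (huni : ∀ a, w 1 a = 1 / (Fintype.card A : ℝ))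
    (hupd : ∀ t ∈ Icc 1 T, ∀ a, w (t + 1) a
      = w t a * Real.exp (η * g t a) / ∑ a', w t a' * Real.exp (η * g t a'))
    (p : A → ℝ) (hp0 : ∀ a, 0 ≤ p a) (hp1 : ∑ a, p a = 1) :
    ∑ t ∈ Icc 1 T, ((∑ a, p a * g t a) - ∑ a, w t a * g t a)
      ≤ Real.log (Fintype.card A) / η + η * T * Vmax ^ 2 := by
  classical
  have hV : 0 < Vmax ∨ True := Or.inr trivial
  set K : ℝ := (Fintype.card A : ℝ) with hK
  have hK1 : (1 : ℝ) ≤ K := by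
    rw [hK]; exact_mod_cast Fintype.card_pos
  have hK0 : (0 : ℝ) < K := lt_of_lt_of_le one_pos hK1
  set Sc : ℕ → A → ℝ := fun n a => ∑ t ∈ Icc 1 n, g t a with hSc
  set W : ℕ → ℝ := fun n => ∑ a, Real.exp (η * Sc n a) with hW
  have hWpos : ∀ n, 0 < W n :=
    fun n => Finset.sum_pos (fun a _ => Real.exp_pos _) univ_nonempty
  have hSc0 : ∀ a, Sc 0 a = 0 := fun a => by simp [hSc]
  have hScS : ∀ n a, 1 ≤ n + 1 → Sc (n + 1) a = Sc n a + g (n + 1) a := by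
    intro n a h
    simp only [hSc]
    exact Finset.sum_Icc_succ_top (by omega) _
  have hW0 : W 0 = K := by simp [hW, hSc0, hK]
  -- softmax representation
  have hw : ∀ n, n ≤ T → ∀ a, w (n + 1) a = Real.exp (η * Sc n a) / W n := by
    intro n
    induction n with
    | zero =>
      intro _ a
      rw [huni a, hW0, hSc0, mul_zero, Real.exp_zero]
    | succ n ih =>
      intro hn a
      have hn' : n ≤ T := by omega
      have hmem : n + 1 ∈ Icc 1 T := by simp; omega
      have hZ : (∑ a', w (n + 1) a' * Real.exp (η * g (n + 1) a')) = W (n + 1) / W n := by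
        rw [eq_div_iff (ne_of_gt (hWpos n)), Finset.sum_mul]
        rw [hW]
        refine Finset.sum_congr rfl fun a' _ => ?_
        rw [ih hn' a', hScS n a' (by omega), mul_add, Real.exp_add]
        field_simp
        exact div_self (ne_of_gt (hWpos n))
      rw [hupd (n + 1) hmem a, hZ, ih hn' a, hScS n a (by omega), mul_add, Real.exp_add]
      rw [div_mul_eq_mul_div, div_div_div_eq]
      rw [div_eq_div_iff (by positivity) (by positivity)]
      ring
  -- normalization and positivity of w (n+1)
  have hwsum : ∀ n, n ≤ T → ∑ a, w (n + 1) a = 1 := by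
    intro n hn
    simp only [fun a => hw n hn a]
    rw [← Finset.sum_div, div_eq_one_iff_eq (ne_of_gt (hWpos n))]
  have hwpos : ∀ n, n ≤ T → ∀ a, 0 ≤ w (n + 1) a := by
    intro n hn a
    rw [hw n hn a]
    positivity
  -- per-step potential bound
  have hstep : ∀ n, n + 1 ≤ T →
      Real.log (W (n + 1)) ≤ Real.log (W n)
        + η * (∑ a, w (n + 1) a * g (n + 1) a) + η ^ 2 * Vmax ^ 2 := by
    intro n hn
    have hn' : n ≤ T := by omega
    have hmem : n + 1 ∈ Icc 1 T := by simp; omega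
    set u : ℝ := ∑ a, w (n + 1) a * Real.exp (η * g (n + 1) a) with hu
    have hWu : W (n + 1) = W n * u := by
      rw [hu, Finset.mul_sum, hW]
      refine Finset.sum_congr rfl fun a _ => ?_
      rw [hw n hn' a, hScS n a (by omega), mul_add, Real.exp_add]
      field_simp
      exact (div_self (ne_of_gt (hWpos n))).symm
    have hupos : 0 < u := by
      have h := hWpos (n + 1)
      rw [hWu] at h
      nlinarith [hWpos n]
    have hub : u ≤ 1 + η * (∑ a, w (n + 1) a * g (n + 1) a) + η ^ 2 * Vmax ^ 2 := by
      have hb : ∀ a ∈ (univ : Finset A), w (n + 1) a * Real.exp (η * g (n + 1) a)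
          ≤ w (n + 1) a + η * (w (n + 1) a * g (n + 1) a)
            + η ^ 2 * (w (n + 1) a * g (n + 1) a ^ 2) := by
        intro a _
        have hx0 : 0 ≤ η * g (n + 1) a := mul_nonneg hη.le (hg0 _ hmem a)
        have hx1 : η * g (n + 1) a ≤ 1 :=
          le_trans (mul_le_mul_of_nonneg_left (hg1 _ hmem a) hη.le) hηV
        have := exp_quad hx0 hx1
        have hwa := hwpos n hn' a
        nlinarith [mul_le_mul_of_nonneg_left this hwa]
      calc u ≤ ∑ a, (w (n + 1) a + η * (w (n + 1) a * g (n + 1) a)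
            + η ^ 2 * (w (n + 1) a * g (n + 1) a ^ 2)) := Finset.sum_le_sum hb
        _ = 1 + η * (∑ a, w (n + 1) a * g (n + 1) a)
            + η ^ 2 * (∑ a, w (n + 1) a * g (n + 1) a ^ 2) := by
          rw [Finset.sum_add_distrib, Finset.sum_add_distrib, ← Finset.mul_sum,
            ← Finset.mul_sum, hwsum n hn']
        _ ≤ 1 + η * (∑ a, w (n + 1) a * g (n + 1) a) + η ^ 2 * Vmax ^ 2 := by
          have hq : (∑ a, w (n + 1) a * g (n + 1) a ^ 2) ≤ Vmax ^ 2 := by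
            calc (∑ a, w (n + 1) a * g (n + 1) a ^ 2) ≤ ∑ a, w (n + 1) a * Vmax ^ 2 :=
                Finset.sum_le_sum fun a _ => mul_le_mul_of_nonneg_left
                  (by nlinarith [hg0 _ hmem a, hg1 _ hmem a]) (hwpos n hn' a)
              _ = Vmax ^ 2 := by rw [← Finset.sum_mul, hwsum n hn', one_mul]
          nlinarith [sq_nonneg η]
    have hlogu : Real.log u ≤ u - 1 := Real.log_le_sub_one_of_pos hupos
    rw [hWu, Real.log_mul (ne_of_gt (hWpos n)) (ne_of_gt hupos)]
    linarith
  -- telescoping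
  have htel : ∀ n, n ≤ T → Real.log (W n) ≤ Real.log K
      + ∑ t ∈ Icc 1 n, (η * (∑ a, w t a * g t a) + η ^ 2 * Vmax ^ 2) := by
    intro n
    induction n with
    | zero => intro _; simp [hW0]
    | succ n ih =>
      intro hn
      have h1 := hstep n hn
      have h2 := ih (by omega)
      rw [Finset.sum_Icc_succ_top (by omega : 1 ≤ n + 1)]
      linarith
  -- lower bound on the potential
  have hlow : η * ∑ t ∈ Icc 1 T, (∑ a, p a * g t a) ≤ Real.log (W T) := by
    have h1 : ∀ a, η * Sc T a ≤ Real.log (W T) := by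
      intro a
      have hle : Real.exp (η * Sc T a) ≤ W T :=
        Finset.single_le_sum (f := fun a => Real.exp (η * Sc T a))
          (fun a _ => (Real.exp_pos _).le) (mem_univ a)
      calc η * Sc T a = Real.log (Real.exp (η * Sc T a)) := (Real.log_exp _).symm
        _ ≤ Real.log (W T) := Real.log_le_log (Real.exp_pos _) hle
    have hswap : ∑ t ∈ Icc 1 T, (∑ a, p a * g t a) = ∑ a, p a * Sc T a := by
      rw [Finset.sum_comm]
      exact Finset.sum_congr rfl fun a _ => by rw [hSc, Finset.mul_sum]
    calc η * ∑ t ∈ Icc 1 T, (∑ a, p a * g t a) = ∑ a, p a * (η * Sc T a) := by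
          rw [hswap, Finset.mul_sum]
          exact Finset.sum_congr rfl fun a _ => by ring
      _ ≤ ∑ a, p a * Real.log (W T) :=
          Finset.sum_le_sum fun a _ => mul_le_mul_of_nonneg_left (h1 a) (hp0 a)
      _ = Real.log (W T) := by rw [← Finset.sum_mul, hp1, one_mul]
  -- combine
  have hsum : ∑ t ∈ Icc 1 T, (η * (∑ a, w t a * g t a) + η ^ 2 * Vmax ^ 2)
      = η * (∑ t ∈ Icc 1 T, ∑ a, w t a * g t a) + (T : ℝ) * (η ^ 2 * Vmax ^ 2) := by
    rw [Finset.sum_add_distrib, ← Finset.mul_sum, Finset.sum_const, Nat.card_Icc]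
    simp
  have Hmain : η * ∑ t ∈ Icc 1 T, (∑ a, p a * g t a)
      ≤ Real.log K + (η * (∑ t ∈ Icc 1 T, ∑ a, w t a * g t a) + (T : ℝ) * (η ^ 2 * Vmax ^ 2)) := by
    rw [← hsum]
    exact le_trans hlow (htel T le_rfl)
  rw [Finset.sum_sub_distrib]
  rw [← sub_nonneg]
  have hfin : Real.log K / η + η * (T : ℝ) * Vmax ^ 2
      - ((∑ t ∈ Icc 1 T, ∑ a, p a * g t a) - ∑ t ∈ Icc 1 T, ∑ a, w t a * g t a)
      = (Real.log K + (η * (∑ t ∈ Icc 1 T, ∑ a, w t a * g t a) + (T : ℝ) * (η ^ 2 * Vmax ^ 2))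
          - η * ∑ t ∈ Icc 1 T, (∑ a, p a * g t a)) / η := by
    field_simp
    ring
  rw [hfin]
  exact div_nonneg (by linarith) hη.le


theorem no_regret_policy_optimization
    {S A : Type*} [Fintype S] [Fintype A] [DecidableEq S] [Nonempty A]
    (P : S → A → S → ℝ) (hP0 : ∀ s a s', 0 ≤ P s a s') (hP1 : ∀ s a, ∑ s', P s a s' = 1)
    (γ : ℝ) (hγ0 : 0 ≤ γ) (hγ1 : γ < 1) (s0 : S)
    (T : ℕ) (Vmax : ℝ)
    (Rt : ℕ → S → A → ℝ)                -- per-round rewards of the MDPs `M_t`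
    (πt : ℕ → S → A → ℝ)                -- iterate policies
    (hπt0 : ∀ t s a, 0 ≤ πt t s a) (hπt1 : ∀ t s, ∑ a, πt t s a = 1)
    (f : ℕ → S → A → ℝ)                 -- `f t = Q^{π_t}_{M_t}`
    (hQ : ∀ t ∈ Icc 1 T, ∀ s a,
      f t s a = Rt t s a + γ * ∑ s', P s a s' * ∑ a', πt t s' a' * f t s' a')
    (hfbd : ∀ t ∈ Icc 1 T, ∀ s a, f t s a ∈ Set.Icc (0 : ℝ) Vmax)
    (η : ℝ) (hη : η = Real.sqrt (Real.log (Fintype.card A) / (2 * Vmax ^ 2 * T)))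
    (huni : ∀ s a, πt 1 s a = 1 / (Fintype.card A : ℝ))
    (hupd : ∀ t ∈ Icc 1 T, ∀ s a,
      πt (t + 1) s a
        = πt t s a * Real.exp (η * f t s a) / ∑ a', πt t s a' * Real.exp (η * f t s a')) :
    ∀ π : S → A → ℝ, (∀ s a, 0 ≤ π s a) → (∀ s, ∑ a, π s a = 1) →
      ∑ t ∈ Icc 1 T, (ret P γ s0 (Rt t) π - ret P γ s0 (Rt t) (πt t))
        ≤ 2 * Vmax * Real.sqrt (2 * T * Real.log (Fintype.card A)) / (1 - γ) := by
  classical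
  intro π hπ0 hπ1
  set L : ℝ := Real.log (Fintype.card A) with hLdef
  have hK1 : (1 : ℝ) ≤ (Fintype.card A : ℝ) := by exact_mod_cast Fintype.card_pos
  have hL0 : 0 ≤ L := Real.log_nonneg hK1
  rcases Nat.eq_zero_or_pos T with hT0 | hT1
  · subst hT0
    simp
  have hTmem : 1 ∈ Icc 1 T := by simp; omega
  have hVmax0 : 0 ≤ Vmax :=
    le_trans (hfbd 1 hTmem s0 (Classical.arbitrary A)).1
      (hfbd 1 hTmem s0 (Classical.arbitrary A)).2
  set B0 : ℝ := 2 * Vmax * Real.sqrt (2 * T * L) with hB0def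
  have hsq0 : 0 ≤ Real.sqrt (2 * T * L) := Real.sqrt_nonneg _
  have hB00 : 0 ≤ B0 := by positivity
  -- per-state regret bound
  have hstate : ∀ s, ∑ t ∈ Icc 1 T,
      ((∑ a, π s a * f t s a) - ∑ a, πt t s a * f t s a) ≤ B0 := by
    intro s
    have htriv : ∀ t ∈ Icc 1 T,
        (∑ a, π s a * f t s a) - (∑ a, πt t s a * f t s a) ≤ Vmax := by
      intro t ht
      have h1 : (∑ a, π s a * f t s a) ≤ ∑ a, π s a * Vmax :=
        Finset.sum_le_sum fun a _ =>
          mul_le_mul_of_nonneg_left (hfbd t ht s a).2 (hπ0 s a)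
      have h2 : (0 : ℝ) ≤ ∑ a, πt t s a * f t s a :=
        Finset.sum_nonneg fun a _ => mul_nonneg (hπt0 t s a) (hfbd t ht s a).1
      have h3 : (∑ a, π s a * Vmax) = Vmax := by
        rw [← Finset.sum_mul, hπ1, one_mul]
      linarith
    have htrivsum : ∑ t ∈ Icc 1 T,
        ((∑ a, π s a * f t s a) - ∑ a, πt t s a * f t s a) ≤ T * Vmax := by
      calc ∑ t ∈ Icc 1 T, ((∑ a, π s a * f t s a) - ∑ a, πt t s a * f t s a)
          ≤ ∑ _t ∈ Icc 1 T, Vmax := Finset.sum_le_sum htriv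
        _ = T * Vmax := by rw [Finset.sum_const, Nat.card_Icc]; simp
    by_cases hV0 : Vmax = 0
    · subst hV0
      simpa using le_trans htrivsum (by simp [hB0def])
    have hVpos : 0 < Vmax := lt_of_le_of_ne hVmax0 (Ne.symm hV0)
    by_cases hL0' : L = 0
    · -- single action
      have hcard : Fintype.card A = 1 := by
        rcases Real.log_eq_zero.mp (hL0'.symm ▸ rfl : Real.log (Fintype.card A) = 0)
          with h | h | h
        · exact absurd h (by positivity)
        · exact_mod_cast h
        · exfalso; linarith [hK1, h]
      have hsub : Subsingleton A := Fintype.card_le_one_iff_subsingleton.mp (le_of_eq hcard)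
      obtain a0 : A := Classical.arbitrary A
      have hconst : ∀ (q : A → ℝ), (∑ a, q a) = 1 → ∀ t,
          (∑ a, q a * f t s a) = f t s a0 := by
        intro q hq t
        calc (∑ a, q a * f t s a) = ∑ a, q a * f t s a0 :=
              Finset.sum_congr rfl fun a _ => by rw [Subsingleton.elim a a0]
          _ = f t s a0 := by rw [← Finset.sum_mul, hq, one_mul]
      have : ∑ t ∈ Icc 1 T, ((∑ a, π s a * f t s a) - ∑ a, πt t s a * f t s a) = 0 := by
        refine Finset.sum_eq_zero fun t _ => ?_
        rw [hconst (π s) (hπ1 s) t, hconst (πt t s) (hπt1 t s) t, sub_self]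
      rw [this]
      exact hB00
    have hLpos : 0 < L := lt_of_le_of_ne hL0 (Ne.symm hL0')
    by_cases hLT : L ≤ 2 * T
    · -- main case: apply exponential weights
      have hargpos : 0 < L / (2 * Vmax ^ 2 * T) := by positivity
      have hηpos : 0 < η := by rw [hη]; exact Real.sqrt_pos.mpr hargpos
      have hη2 : η ^ 2 = L / (2 * Vmax ^ 2 * T) := by
        rw [hη, Real.sq_sqrt hargpos.le]
      have hηV : η * Vmax ≤ 1 := by
        have h1 : (η * Vmax) ^ 2 = L / (2 * T) := by
          rw [mul_pow, hη2]
          field_simp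
        have h2 : (η * Vmax) ^ 2 ≤ 1 := by
          rw [h1, div_le_one (by positivity)]
          linarith
        nlinarith [mul_nonneg hηpos.le hVmax0]
      have hew := exp_weights T (fun t a => f t s a) Vmax η hηpos hηV
        (fun t ht a => (hfbd t ht s a).1) (fun t ht a => (hfbd t ht s a).2)
        (fun t a => πt t s a) (fun a => huni s a)
        (fun t ht a => hupd t ht s a) (π s) (hπ0 s) (hπ1 s)
      refine le_trans hew ?_
      -- L/η + η T Vmax² ≤ B0
      have hTpos : (0 : ℝ) < T := by exact_mod_cast hT1
      have hL_eq : L = η ^ 2 * (2 * Vmax ^ 2 * T) := by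
        rw [hη2]
        field_simp
      have hsqeq : Real.sqrt (2 * T * L) = 2 * η * Vmax * T := by
        rw [hL_eq, show 2 * (T : ℝ) * (η ^ 2 * (2 * Vmax ^ 2 * T)) = (2 * η * Vmax * T) ^ 2 by ring]
        exact Real.sqrt_sq (by positivity)
      have hLη : L / η = η * (2 * Vmax ^ 2 * T) := by
        rw [hL_eq, pow_two, mul_assoc, mul_div_assoc]
        rw [mul_div_cancel_left₀ _ hηpos.ne']
      rw [hB0def, hsqeq, hLη]
      nlinarith [mul_pos (mul_pos hηpos hVpos) hTpos, sq_nonneg Vmax]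
    · -- large log case: trivial bound
      push_neg at hLT
      refine le_trans htrivsum ?_
      have h4 : (2 * T : ℝ) ≤ Real.sqrt (2 * T * L) := by
        have h5 := Real.sqrt_le_sqrt
          (show ((2 * T : ℝ)) ^ 2 ≤ 2 * T * L by
            nlinarith [hLT, Nat.cast_nonneg (α := ℝ) T])
        rwa [Real.sqrt_sq (by positivity)] at h5
      rw [hB0def]
      nlinarith [mul_le_mul_of_nonneg_left h4 hVmax0]
  -- assembly via performance difference
  set μ := sMarg P π s0 with hμdef
  have hμ0 : ∀ k s, 0 ≤ μ k s := sMarg_nonneg hP0 hπ0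
  have hμ1 : ∀ k, ∑ s, μ k s = 1 := sMarg_sum_one hP1 hπ1
  set Δ : ℕ → ℕ → ℝ := fun t k =>
    ∑ s, μ k s * ((∑ a, π s a * f t s a) - ∑ a, πt t s a * f t s a) with hΔdef
  have hΔbd : ∀ t ∈ Icc 1 T, ∀ k, |Δ t k| ≤ 2 * Vmax := by
    intro t ht k
    refine abs_avg_le (hμ0 k) (hμ1 k) fun s => ?_
    have h1 : |∑ a, π s a * f t s a| ≤ Vmax :=
      abs_avg_le (hπ0 s) (hπ1 s) fun a => by
        rw [abs_of_nonneg (hfbd t ht s a).1]; exact (hfbd t ht s a).2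
    have h2 : |∑ a, πt t s a * f t s a| ≤ Vmax :=
      abs_avg_le (hπt0 t s) (hπt1 t s) fun a => by
        rw [abs_of_nonneg (hfbd t ht s a).1]; exact (hfbd t ht s a).2
    calc |(∑ a, π s a * f t s a) - ∑ a, πt t s a * f t s a|
        ≤ |∑ a, π s a * f t s a| + |∑ a, πt t s a * f t s a| := abs_sub _ _
      _ ≤ 2 * Vmax := by linarith
  have hΔsummable : ∀ t ∈ Icc 1 T, Summable (fun k => γ ^ k * Δ t k) := fun t ht =>
    summable_geo_bound hγ0 hγ1 (hΔbd t ht)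
  have hdiff : ∀ t ∈ Icc 1 T,
      ret P γ s0 (Rt t) π - ret P γ s0 (Rt t) (πt t) = ∑' k : ℕ, γ ^ k * Δ t k := by
    intro t ht
    have hCQ : ∀ s a, |f t s a| ≤ Vmax := fun s a => by
      rw [abs_of_nonneg (hfbd t ht s a).1]; exact (hfbd t ht s a).2
    have hpd1 := perf_diff (ρ := π) (s0 := s0) hP0 hP1 hγ0 hγ1 (Rt t) (f t) (πt t)
      (hπt0 t) (hπt1 t) (hQ t ht) hCQ hπ0 hπ1
    have hpd2 := perf_diff (ρ := πt t) (s0 := s0) hP0 hP1 hγ0 hγ1 (Rt t) (f t) (πt t)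
      (hπt0 t) (hπt1 t) (hQ t ht) hCQ (hπt0 t) (hπt1 t)
    have hz : ∑' k : ℕ, γ ^ k * ∑ s, sMarg P (πt t) s0 k s *
        ((∑ a, πt t s a * f t s a) - ∑ a, πt t s a * f t s a) = 0 := by
      simp
    rw [hpd1, hpd2, hz]
    ring
  rw [Finset.sum_congr rfl hdiff, ← Summable.tsum_finsetSum hΔsummable]
  have hpt : ∀ k : ℕ, (∑ t ∈ Icc 1 T, γ ^ k * Δ t k)
      = γ ^ k * ∑ s, μ k s * ∑ t ∈ Icc 1 T,
          ((∑ a, π s a * f t s a) - ∑ a, πt t s a * f t s a) := by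
    intro k
    rw [← Finset.mul_sum]
    congr 1
    rw [hΔdef, Finset.sum_comm]
    exact Finset.sum_congr rfl fun s _ => by rw [Finset.mul_sum]
  have hbound : ∀ k : ℕ, (∑ t ∈ Icc 1 T, γ ^ k * Δ t k) ≤ γ ^ k * B0 := by
    intro k
    rw [hpt k]
    refine mul_le_mul_of_nonneg_left ?_ (pow_nonneg hγ0 k)
    calc (∑ s, μ k s * ∑ t ∈ Icc 1 T, ((∑ a, π s a * f t s a) - ∑ a, πt t s a * f t s a))
        ≤ ∑ s, μ k s * B0 :=
          Finset.sum_le_sum fun s _ => mul_le_mul_of_nonneg_left (hstate s) (hμ0 k s)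
      _ = B0 := by rw [← Finset.sum_mul, hμ1, one_mul]
  have hsummL : Summable (fun k => ∑ t ∈ Icc 1 T, γ ^ k * Δ t k) :=
    summable_sum fun t ht => hΔsummable t ht
  have hsummR : Summable (fun k : ℕ => γ ^ k * B0) :=
    (summable_geometric_of_lt_one hγ0 hγ1).mul_right B0
  calc (∑' k : ℕ, ∑ t ∈ Icc 1 T, γ ^ k * Δ t k) ≤ ∑' k : ℕ, γ ^ k * B0 :=
        Summable.tsum_le_tsum hbound hsummL hsummR
    _ = B0 / (1 - γ) := by
        rw [tsum_mul_right, tsum_geometric_of_lt_one hγ0 hγ1, inv_mul_eq_div]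
    _ = 2 * Vmax * Real.sqrt (2 * T * L) / (1 - γ) := by rw [hB0def]
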